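/- Let n ≥ 1, m > 2n, and let σ be a permutation of {1,…,m} with no fixed points whose cycle decomposition has at least two (non-trivial) cycles. Then σ contains some permutation τ of {1,…,m′} with m′ ≤ m−2 and ℓ(τ) ≥ n. -/

import Mathlib

/-- The (Coxeter) length of a permutation: its number of inversions,
i.e. pairs `i < j` with `σ i > σ j`. -/
def invCount {m : ℕ} (σ : Equiv.Perm (Fin m)) : ℕ :=
  (Finset.univ.filter (fun p : Fin m × Fin m => p.1 < p.2 ∧ σ p.2 < σ p.1)).card

/-- `σ` pattern-contains `π`: there are indices `i_1 < ⋯ < i_k` such that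
`σ (i_a) < σ (i_b)` iff `π a < π b`. -/
def PatternContains {n k : ℕ} (σ : Equiv.Perm (Fin n)) (π : Equiv.Perm (Fin k)) : Prop :=
  ∃ f : Fin k ↪o Fin n, ∀ a b : Fin k, σ (f a) < σ (f b) ↔ π a < π b

open Finset

namespace DCL

variable {m : ℕ}

/-- number of inversions of `σ` with both coordinates in `S`. -/
def invIn (σ : Equiv.Perm (Fin m)) (S : Finset (Fin m)) : ℕ :=
  ((S ×ˢ S).filter (fun p : Fin m × Fin m => p.1 < p.2 ∧ σ p.2 < σ p.1)).card

lemma image_eq (σ : Equiv.Perm (Fin m)) {C : Finset (Fin m)} (hC : ∀ x ∈ C, σ x ∈ C) :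
    C.image σ = C := by
  apply Finset.eq_of_subset_of_card_le
  · intro y hy
    obtain ⟨x, hx, rfl⟩ := Finset.mem_image.mp hy
    exact hC x hx
  · rw [Finset.card_image_of_injective _ σ.injective]

lemma mem_of_apply_mem (σ : Equiv.Perm (Fin m)) {C : Finset (Fin m)}
    (hC : ∀ x ∈ C, σ x ∈ C) {y : Fin m} (h : σ y ∈ C) : y ∈ C := by
  rw [← image_eq σ hC] at h
  obtain ⟨x, hx, hxy⟩ := Finset.mem_image.mp h
  cases σ.injective hxy
  exact hx

lemma partner_lt (σ : Equiv.Perm (Fin m)) {C : Finset (Fin m)} (hC : ∀ x ∈ C, σ x ∈ C)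
    {x : Fin m} (hx : x ∈ C) (hlt : x < σ x) :
    ∃ y ∈ C, x < y ∧ σ y < σ x := by
  by_contra hcon
  push_neg at hcon
  set A := C.filter (fun y => σ y < σ x) with hA
  set A' := C.filter (fun t => t < σ x) with hA'
  set B := C.filter (fun y => y ≤ x) with hB
  have hAA' : A' = A.image σ := by
    ext t
    simp only [hA, hA', Finset.mem_filter, Finset.mem_image]
    constructor
    · rintro ⟨htC, htlt⟩
      have : t ∈ C.image σ := by rw [image_eq σ hC]; exact htC
      obtain ⟨y, hy, rfl⟩ := Finset.mem_image.mp this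
      exact ⟨y, ⟨hy, htlt⟩, rfl⟩
    · rintro ⟨y, ⟨hy, hylt⟩, rfl⟩
      exact ⟨hC y hy, hylt⟩
  have hcardAA' : A'.card = A.card := by
    rw [hAA', Finset.card_image_of_injective _ σ.injective]
  have hBA' : B ⊆ A' := by
    intro y hy
    simp only [hB, hA', Finset.mem_filter] at *
    exact ⟨hy.1, lt_of_le_of_lt hy.2 hlt⟩
  have hxB : x ∈ B := by simp [hB, hx]
  have hAB : A ⊆ B.erase x := by
    intro y hy
    simp only [hA, Finset.mem_filter] at hy
    have hyx : y ≤ x := by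
      by_contra hyx
      push_neg at hyx
      exact absurd hy.2 (not_lt.mpr (hcon y hy.1 hyx))
    refine Finset.mem_erase.mpr ⟨?_, Finset.mem_filter.mpr ⟨hy.1, hyx⟩⟩
    rintro rfl
    exact absurd hy.2 (lt_irrefl _)
  have h1 : A.card ≤ B.card - 1 := by
    calc A.card ≤ (B.erase x).card := Finset.card_le_card hAB
    _ = B.card - 1 := Finset.card_erase_of_mem hxB
  have h2 : B.card ≤ A.card := hcardAA' ▸ Finset.card_le_card hBA'
  have h3 : 0 < B.card := Finset.card_pos.mpr ⟨x, hxB⟩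
  omega

lemma partner_gt (σ : Equiv.Perm (Fin m)) {C : Finset (Fin m)} (hC : ∀ x ∈ C, σ x ∈ C)
    {x : Fin m} (hx : x ∈ C) (hlt : σ x < x) :
    ∃ y ∈ C, y < x ∧ σ x < σ y := by
  by_contra hcon
  push_neg at hcon
  set A := C.filter (fun y => σ x < σ y) with hA
  set A' := C.filter (fun t => σ x < t) with hA'
  set B := C.filter (fun y => x ≤ y) with hB
  have hAA' : A' = A.image σ := by
    ext t
    simp only [hA, hA', Finset.mem_filter, Finset.mem_image]
    constructor
    · rintro ⟨htC, htlt⟩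
      have : t ∈ C.image σ := by rw [image_eq σ hC]; exact htC
      obtain ⟨y, hy, rfl⟩ := Finset.mem_image.mp this
      exact ⟨y, ⟨hy, htlt⟩, rfl⟩
    · rintro ⟨y, ⟨hy, hylt⟩, rfl⟩
      exact ⟨hC y hy, hylt⟩
  have hcardAA' : A'.card = A.card := by
    rw [hAA', Finset.card_image_of_injective _ σ.injective]
  have hBA' : B ⊆ A' := by
    intro y hy
    simp only [hB, hA', Finset.mem_filter] at *
    exact ⟨hy.1, lt_of_lt_of_le hlt hy.2⟩
  have hxB : x ∈ B := by simp [hB, hx]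
  have hAB : A ⊆ B.erase x := by
    intro y hy
    simp only [hA, Finset.mem_filter] at hy
    have hyx : x ≤ y := by
      by_contra hyx
      push_neg at hyx
      exact absurd hy.2 (not_lt.mpr (hcon y hy.1 hyx))
    refine Finset.mem_erase.mpr ⟨?_, Finset.mem_filter.mpr ⟨hy.1, hyx⟩⟩
    rintro rfl
    exact absurd hy.2 (lt_irrefl _)
  have h1 : A.card ≤ B.card - 1 := by
    calc A.card ≤ (B.erase x).card := Finset.card_le_card hAB
    _ = B.card - 1 := Finset.card_erase_of_mem hxB
  have h2 : B.card ≤ A.card := hcardAA' ▸ Finset.card_le_card hBA'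
  have h3 : 0 < B.card := Finset.card_pos.mpr ⟨x, hxB⟩
  omega

lemma card_le_two_mul_invIn (σ : Equiv.Perm (Fin m)) {C : Finset (Fin m)}
    (hC : ∀ x ∈ C, σ x ∈ C) (hf : ∀ x ∈ C, σ x ≠ x) :
    C.card ≤ 2 * invIn σ C := by
  classical
  have hexc : (C.filter (fun x => x < σ x)).card ≤ invIn σ C := by
    have key : ∀ x ∈ C.filter (fun x => x < σ x), ∃ y, y ∈ C ∧ x < y ∧ σ y < σ x := by
      intro x hx
      rw [Finset.mem_filter] at hx
      obtain ⟨y, hy, h1, h2⟩ := partner_lt σ hC hx.1 hx.2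
      exact ⟨y, hy, h1, h2⟩
    choose! g hg using key
    apply Finset.card_le_card_of_injOn (fun x => (x, g x))
    · intro x hx
      obtain ⟨h1, h2, h3⟩ := hg x hx
      rw [Finset.mem_coe, Finset.mem_filter] at hx
      exact Finset.mem_filter.mpr ⟨Finset.mem_product.mpr ⟨hx.1, h1⟩, h2, h3⟩
    · intro x _ y _ h
      exact congrArg Prod.fst h
  have haexc : (C.filter (fun x => σ x < x)).card ≤ invIn σ C := by
    have key : ∀ x ∈ C.filter (fun x => σ x < x), ∃ y, y ∈ C ∧ y < x ∧ σ x < σ y := by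
      intro x hx
      rw [Finset.mem_filter] at hx
      obtain ⟨y, hy, h1, h2⟩ := partner_gt σ hC hx.1 hx.2
      exact ⟨y, hy, h1, h2⟩
    choose! g hg using key
    apply Finset.card_le_card_of_injOn (fun x => (g x, x))
    · intro x hx
      obtain ⟨h1, h2, h3⟩ := hg x hx
      rw [Finset.mem_coe, Finset.mem_filter] at hx
      exact Finset.mem_filter.mpr ⟨Finset.mem_product.mpr ⟨h1, hx.1⟩, h2, h3⟩
    · intro x _ y _ h
      exact congrArg Prod.snd h
  have hsplit : (C.filter (fun x => x < σ x)).card + (C.filter (fun x => σ x < x)).card = C.card := by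
    have h := Finset.card_filter_add_card_filter_not (s := C) (p := fun x => x < σ x)
    have heq : C.filter (fun x => ¬ x < σ x) = C.filter (fun x => σ x < x) := by
      apply Finset.filter_congr
      intro x hx
      simp only [not_lt, eq_iff_iff]
      constructor
      · intro h'
        exact lt_of_le_of_ne h' (hf x hx)
      · exact le_of_lt
    rw [heq] at h
    exact h
  omega


section Graph
variable {V : Type*} [DecidableEq V]

/-- degree of a vertex in an edge finset -/
def deg (E : Finset (V × V)) (v : V) : ℕ := (E.filter (fun p => p.1 = v ∨ p.2 = v)).card

lemma handshake (C : Finset V) (E : Finset (V × V))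
    (hE : ∀ p ∈ E, p.1 ∈ C ∧ p.2 ∈ C ∧ p.1 ≠ p.2) :
    ∑ v ∈ C, deg E v = 2 * E.card := by
  unfold deg
  simp only [Finset.card_filter]
  rw [Finset.sum_comm]
  have key : ∀ p ∈ E, (∑ v ∈ C, if p.1 = v ∨ p.2 = v then 1 else 0) = 2 := by
    intro p hp
    obtain ⟨h1, h2, h3⟩ := hE p hp
    rw [← Finset.card_filter]
    have heq : C.filter (fun v => p.1 = v ∨ p.2 = v) = {p.1, p.2} := by
      ext v
      simp only [Finset.mem_filter, Finset.mem_insert, Finset.mem_singleton]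
      constructor
      · rintro ⟨_, h | h⟩
        · exact Or.inl h.symm
        · exact Or.inr h.symm
      · rintro (rfl | rfl)
        · exact ⟨h1, Or.inl rfl⟩
        · exact ⟨h2, Or.inr rfl⟩
    rw [heq, Finset.card_insert_of_notMem (by simpa using h3), Finset.card_singleton]
  rw [Finset.sum_congr rfl key, Finset.sum_const, smul_eq_mul, mul_comm]

lemma kept_bound (E : Finset (V × V)) (a b : V) :
    E.card ≤ (E.filter (fun p => p.1 ≠ a ∧ p.2 ≠ a ∧ p.1 ≠ b ∧ p.2 ≠ b)).card
      + deg E a + deg E b := by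
  classical
  have hsplit := Finset.card_filter_add_card_filter_not
    (s := E) (p := fun p => p.1 ≠ a ∧ p.2 ≠ a ∧ p.1 ≠ b ∧ p.2 ≠ b)
  have hsub : E.filter (fun p => ¬(p.1 ≠ a ∧ p.2 ≠ a ∧ p.1 ≠ b ∧ p.2 ≠ b)) ⊆
      E.filter (fun p => p.1 = a ∨ p.2 = a) ∪ E.filter (fun p => p.1 = b ∨ p.2 = b) := by
    intro p hp
    rw [Finset.mem_filter] at hp
    rw [Finset.mem_union, Finset.mem_filter, Finset.mem_filter]
    tauto
  have h2 := Finset.card_le_card hsub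
  have h3 := Finset.card_union_le (E.filter (fun p => p.1 = a ∨ p.2 = a))
    (E.filter (fun p => p.1 = b ∨ p.2 = b))
  unfold deg
  omega

lemma kept_bound' (E : Finset (V × V)) {a b : V} {p₀ : V × V} (hp₀ : p₀ ∈ E)
    (he1 : p₀.1 = a) (he2 : p₀.2 = b) :
    E.card + 1 ≤ (E.filter (fun p => p.1 ≠ a ∧ p.2 ≠ a ∧ p.1 ≠ b ∧ p.2 ≠ b)).card
      + deg E a + deg E b := by
  classical
  have hsplit := Finset.card_filter_add_card_filter_not
    (s := E) (p := fun p => p.1 ≠ a ∧ p.2 ≠ a ∧ p.1 ≠ b ∧ p.2 ≠ b)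
  have hsub : E.filter (fun p => ¬(p.1 ≠ a ∧ p.2 ≠ a ∧ p.1 ≠ b ∧ p.2 ≠ b)) ⊆
      E.filter (fun p => p.1 = a ∨ p.2 = a) ∪ E.filter (fun p => p.1 = b ∨ p.2 = b) := by
    intro p hp
    rw [Finset.mem_filter] at hp
    rw [Finset.mem_union, Finset.mem_filter, Finset.mem_filter]
    tauto
  have h2 := Finset.card_le_card hsub
  have h3 := Finset.card_union_add_card_inter (E.filter (fun p => p.1 = a ∨ p.2 = a))
    (E.filter (fun p => p.1 = b ∨ p.2 = b))
  have h4 : 0 < ((E.filter (fun p => p.1 = a ∨ p.2 = a)) ∩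
      (E.filter (fun p => p.1 = b ∨ p.2 = b))).card := by
    apply Finset.card_pos.mpr
    exact ⟨p₀, Finset.mem_inter.mpr ⟨Finset.mem_filter.mpr ⟨hp₀, Or.inl he1⟩,
      Finset.mem_filter.mpr ⟨hp₀, Or.inr he2⟩⟩⟩
  unfold deg
  omega

lemma avg_case (C : Finset V) (E : Finset (V × V))
    (hE : ∀ p ∈ E, p.1 ∈ C ∧ p.2 ∈ C ∧ p.1 ≠ p.2)
    (hc : 4 ≤ C.card) (hI : C.card + 4 ≤ 2 * E.card) :
    ∃ a ∈ C, ∃ b ∈ C, a ≠ b ∧ C.card ≤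
      2 * ((E.filter (fun p => p.1 ≠ a ∧ p.2 ≠ a ∧ p.1 ≠ b ∧ p.2 ≠ b)).card + 1) := by
  classical
  by_contra hcon
  push_neg at hcon
  -- double counting
  have dc : ∑ q ∈ C.offDiag,
      (E.filter (fun p => p.1 ≠ q.1 ∧ p.2 ≠ q.1 ∧ p.1 ≠ q.2 ∧ p.2 ≠ q.2)).card
      = E.card * ((C.card - 2) * (C.card - 3)) := by
    simp only [Finset.card_filter]
    rw [Finset.sum_comm]
    have key : ∀ p ∈ E, ((∑ q ∈ C.offDiag, if p.1 ≠ q.1 ∧ p.2 ≠ q.1 ∧ p.1 ≠ q.2 ∧ p.2 ≠ q.2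
        then 1 else 0) : ℕ) = (C.card - 2) * (C.card - 3) := by
      intro p hp
      obtain ⟨h1, h2, h3⟩ := hE p hp
      rw [← Finset.card_filter]
      have hfl : C.offDiag.filter (fun q => p.1 ≠ q.1 ∧ p.2 ≠ q.1 ∧ p.1 ≠ q.2 ∧ p.2 ≠ q.2)
          = ((C.erase p.1).erase p.2).offDiag := by
        ext q
        simp only [Finset.mem_filter, Finset.mem_offDiag, Finset.mem_erase]
        constructor
        · rintro ⟨⟨q1C, q2C, q12⟩, a1, a2, a3, a4⟩
          exact ⟨⟨fun h => a2 h.symm, fun h => a1 h.symm, q1C⟩,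
                 ⟨fun h => a4 h.symm, fun h => a3 h.symm, q2C⟩, q12⟩
        · rintro ⟨⟨b1, b2, q1C⟩, ⟨b3, b4, q2C⟩, q12⟩
          exact ⟨⟨q1C, q2C, q12⟩, fun h => b2 h.symm, fun h => b1 h.symm,
            fun h => b4 h.symm, fun h => b3 h.symm⟩
      rw [hfl, Finset.offDiag_card]
      have hc2 : ((C.erase p.1).erase p.2).card = C.card - 2 := by
        rw [Finset.card_erase_of_mem (Finset.mem_erase.mpr ⟨Ne.symm h3, h2⟩),
          Finset.card_erase_of_mem h1]
        omega
      rw [hc2]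
      obtain ⟨d, hd⟩ := Nat.exists_eq_add_of_le hc
      have e2 : C.card - 2 = d + 2 := by omega
      have e3 : C.card - 3 = d + 1 := by omega
      rw [e2, e3]
      have : (d+2)*(d+2) = (d+2)*(d+1) + (d+2) := by ring
      omega
    rw [Finset.sum_congr rfl key, Finset.sum_const, smul_eq_mul]
  -- upper bound from hcon
  have ub : ∀ q ∈ C.offDiag,
      2 * (E.filter (fun p => p.1 ≠ q.1 ∧ p.2 ≠ q.1 ∧ p.1 ≠ q.2 ∧ p.2 ≠ q.2)).card
        ≤ C.card - 3 := by
    intro q hq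
    rw [Finset.mem_offDiag] at hq
    have := hcon q.1 hq.1 q.2 hq.2.1 hq.2.2
    omega
  have total : 2 * (E.card * ((C.card - 2) * (C.card - 3)))
      ≤ C.offDiag.card * (C.card - 3) := by
    rw [← dc, Finset.mul_sum]
    calc ∑ q ∈ C.offDiag, 2 * (E.filter (fun p => p.1 ≠ q.1 ∧ p.2 ≠ q.1 ∧ p.1 ≠ q.2 ∧ p.2 ≠ q.2)).card
        ≤ ∑ _q ∈ C.offDiag, (C.card - 3) := Finset.sum_le_sum ub
      _ = C.offDiag.card * (C.card - 3) := by rw [Finset.sum_const, smul_eq_mul]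
  rw [Finset.offDiag_card] at total
  obtain ⟨d, hd⟩ := Nat.exists_eq_add_of_le hc
  obtain ⟨e, he⟩ := Nat.exists_eq_add_of_le hI
  have e2 : C.card - 2 = d + 2 := by omega
  have e3 : C.card - 3 = d + 1 := by omega
  have e4 : C.card * C.card - C.card = (4 + d) * (3 + d) := by
    have h1 : C.card * C.card = (4+d)*(4+d) := by rw [← hd]
    have h2 : (4+d)*(4+d) = (4+d)*(3+d) + (4+d) := by ring
    omega
  rw [e2, e3, e4] at total
  have e5 : 2 * (E.card * ((d + 2) * (d + 1))) = (2 * E.card) * ((d+2)*(d+1)) := by ring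
  rw [e5, he, hd] at total
  -- total : (4 + d + 4 + e) * ((d+2)*(d+1)) ≤ (4+d)*(3+d)*(d+1)
  have total2 : ((8 + d + e) * (d + 2)) * (d+1) ≤ ((4+d)*(3+d)) * (d+1) := by
    calc ((8 + d + e) * (d + 2)) * (d+1) = (4 + d + 4 + e) * ((d+2)*(d+1)) := by ring
    _ ≤ (4+d)*(3+d) * (d+1) := total
  have total3 := Nat.le_of_mul_le_mul_right total2 (by omega : 0 < d + 1)
  nlinarith [total3]

lemma graph_main (C : Finset V) (E : Finset (V × V))
    (hE : ∀ p ∈ E, p.1 ∈ C ∧ p.2 ∈ C ∧ p.1 ≠ p.2)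
    (hdeg : ∀ v ∈ C, ∃ p ∈ E, p.1 = v ∨ p.2 = v)
    (hI : C.card ≤ 2 * E.card) (hc : 4 ≤ C.card) :
    ∃ a ∈ C, ∃ b ∈ C, a ≠ b ∧ C.card ≤
      2 * ((E.filter (fun p => p.1 ≠ a ∧ p.2 ≠ a ∧ p.1 ≠ b ∧ p.2 ≠ b)).card + 1) := by
  classical
  by_cases hbig : C.card + 4 ≤ 2 * E.card
  · exact avg_case C E hE hc hbig
  push_neg at hbig
  -- degree ≥ 1 everywhere on C
  have hdeg1 : ∀ v ∈ C, 1 ≤ deg E v := by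
    intro v hv
    obtain ⟨p, hp, ht⟩ := hdeg v hv
    exact Finset.card_pos.mpr ⟨p, Finset.mem_filter.mpr ⟨hp, ht⟩⟩
  set D1 := C.filter (fun v => deg E v = 1) with hD1
  -- 2*C.card ≤ 2*E.card + D1.card
  have hhs := handshake C E hE
  have hcount : 2 * C.card ≤ 2 * E.card + D1.card := by
    have hlow : ∀ v ∈ C, 2 ≤ deg E v + (if deg E v = 1 then 1 else 0) := by
      intro v hv
      have := hdeg1 v hv
      split <;> omega
    have hsum : ∑ v ∈ C, (2 : ℕ) ≤ ∑ v ∈ C, (deg E v + if deg E v = 1 then 1 else 0) :=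
      Finset.sum_le_sum hlow
    rw [Finset.sum_add_distrib, hhs, ← Finset.card_filter, Finset.sum_const, smul_eq_mul,
      mul_comm] at hsum
    exact hsum
  by_cases h2a : ∃ p ∈ E, deg E p.1 = 1 ∧ deg E p.2 = 1
  · obtain ⟨p, hp, hd1, hd2⟩ := h2a
    obtain ⟨h1, h2, h3⟩ := hE p hp
    refine ⟨p.1, h1, p.2, h2, h3, ?_⟩
    have := kept_bound' E hp rfl rfl
    omega
  · push_neg at h2a
    by_cases hmid : C.card + 2 ≤ 2 * E.card
    · -- pick two degree-1 vertices
      have hs2 : 1 < D1.card := by omega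
      obtain ⟨a, ha, b, hb, hab⟩ := Finset.one_lt_card.mp hs2
      rw [hD1, Finset.mem_filter] at ha hb
      refine ⟨a, ha.1, b, hb.1, hab, ?_⟩
      have := kept_bound E a b
      rw [ha.2, hb.2] at this
      omega
    · -- 2E ≤ c+1 : contradiction
      exfalso
      set H := C.filter (fun v => ¬ deg E v = 1) with hH
      have hEH : ∀ p ∈ E, p.1 ∈ H ∨ p.2 ∈ H := by
        intro p hp
        obtain ⟨h1, h2, _⟩ := hE p hp
        rcases Decidable.em (deg E p.1 = 1) with hx | hx
        · right
          refine Finset.mem_filter.mpr ⟨h2, ?_⟩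
          intro hy
          exact h2a p hp hx hy
        · exact Or.inl (Finset.mem_filter.mpr ⟨h1, hx⟩)
      have hEsub : E ⊆ H.biUnion (fun v => E.filter (fun p => p.1 = v ∨ p.2 = v)) := by
        intro p hp
        rw [Finset.mem_biUnion]
        rcases hEH p hp with h | h
        · exact ⟨p.1, h, Finset.mem_filter.mpr ⟨hp, Or.inl rfl⟩⟩
        · exact ⟨p.2, h, Finset.mem_filter.mpr ⟨hp, Or.inr rfl⟩⟩
      have hEcard : E.card ≤ ∑ v ∈ H, deg E v :=
        le_trans (Finset.card_le_card hEsub) (Finset.card_biUnion_le)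
      have hsplitsum : ∑ v ∈ D1, deg E v + ∑ v ∈ H, deg E v = 2 * E.card := by
        rw [← hhs]
        exact Finset.sum_filter_add_sum_filter_not C _ _
      have hD1sum : ∑ v ∈ D1, deg E v = D1.card := by
        rw [Finset.card_eq_sum_ones D1]
        apply Finset.sum_congr rfl
        intro v hv
        exact (Finset.mem_filter.mp hv).2
      omega

end Graph

lemma pattern_of_subset (σ : Equiv.Perm (Fin m)) (S : Finset (Fin m)) :
    ∃ τ : Equiv.Perm (Fin S.card), PatternContains σ τ ∧ invIn σ S ≤ invCount τ := by
  classical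
  let e : Fin S.card ↪o Fin m := S.orderEmbOfFin rfl
  have he_mem : ∀ a, e a ∈ S := fun a => S.orderEmbOfFin_mem rfl a
  have he_surj : ∀ x ∈ S, ∃ a, e a = x := by
    intro x hx
    have h := S.range_orderEmbOfFin rfl
    have : x ∈ Set.range ⇑(S.orderEmbOfFin rfl) := by rw [h]; exact hx
    exact this
  set v : Fin S.card → Fin m := fun a => σ (e a) with hv
  have hv_inj : Function.Injective v := fun a b h => e.injective (σ.injective h)
  have hr_lt : ∀ a : Fin S.card, (Finset.univ.filter (fun b => v b < v a)).card < S.card := by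
    intro a
    have hsub : Finset.univ.filter (fun b => v b < v a) ⊆ Finset.univ.erase a := by
      intro b hb
      rw [Finset.mem_filter] at hb
      refine Finset.mem_erase.mpr ⟨?_, Finset.mem_univ b⟩
      rintro rfl
      exact absurd hb.2 (lt_irrefl _)
    calc (Finset.univ.filter (fun b => v b < v a)).card
        ≤ (Finset.univ.erase a).card := Finset.card_le_card hsub
      _ < Finset.univ.card := Finset.card_erase_lt_of_mem (Finset.mem_univ a)
      _ = S.card := by simp
  set t : Fin S.card → Fin S.card :=
    fun a => ⟨(Finset.univ.filter (fun b => v b < v a)).card, hr_lt a⟩ with ht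
  have hmono : ∀ {a b : Fin S.card}, v a < v b → t a < t b := by
    intro a b h
    have hss : Finset.univ.filter (fun x => v x < v a) ⊂ Finset.univ.filter (fun x => v x < v b) := by
      constructor
      · intro x hx
        rw [Finset.mem_filter] at *
        exact ⟨hx.1, lt_trans hx.2 h⟩
      · intro hcon
        have ha : a ∈ Finset.univ.filter (fun x => v x < v b) :=
          Finset.mem_filter.mpr ⟨Finset.mem_univ a, h⟩
        have := hcon ha
        rw [Finset.mem_filter] at this
        exact absurd this.2 (lt_irrefl _)
    exact Finset.card_lt_card hss
  have hiff : ∀ a b, v a < v b ↔ t a < t b := by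
    intro a b
    constructor
    · exact hmono
    · intro h
      rcases lt_trichotomy (v a) (v b) with h' | h' | h'
      · exact h'
      · exact absurd h (by rw [hv_inj h']; exact lt_irrefl _)
      · exact absurd (hmono h') (lt_asymm h)
  have ht_inj : Function.Injective t := by
    intro a b h
    by_contra hn
    rcases (hv_inj.ne hn).lt_or_gt with h' | h'
    · exact absurd h (ne_of_lt (hmono h'))
    · exact absurd h.symm (ne_of_lt (hmono h'))
  let τ : Equiv.Perm (Fin S.card) := Equiv.ofBijective t (Finite.injective_iff_bijective.mp ht_inj)
  have hτ : ∀ a, τ a = t a := fun _ => rfl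
  refine ⟨τ, ⟨e, ?_⟩, ?_⟩
  · intro a b
    rw [hτ, hτ]
    exact hiff a b
  · unfold invCount invIn
    apply Finset.card_le_card_of_surjOn (fun p : Fin S.card × Fin S.card => (e p.1, e p.2))
    intro q hq
    simp only [Finset.coe_filter, Set.mem_setOf_eq, Finset.mem_product, Finset.mem_coe] at hq
    obtain ⟨⟨hq1, hq2⟩, hlt, hinv⟩ := hq
    obtain ⟨a, ha⟩ := he_surj q.1 hq1
    obtain ⟨b, hb⟩ := he_surj q.2 hq2
    refine ⟨(a, b), ?_, ?_⟩
    · simp only [Finset.coe_filter, Set.mem_setOf_eq, Finset.mem_univ, true_and]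
      constructor
      · rw [← e.lt_iff_lt, ha, hb]
        exact hlt
      · rw [hτ, hτ]
        apply (hiff b a).mp
        show σ (e b) < σ (e a)
        rw [ha, hb]
        exact hinv
    · rw [Prod.ext_iff]
      exact ⟨ha, hb⟩


lemma mem_SS (a b x : Fin m) :
    x ∈ (Finset.univ.erase a).erase b ↔ x ≠ a ∧ x ≠ b := by
  simp [Finset.mem_erase, and_comm]

lemma main_ml (σ : Equiv.Perm (Fin m)) (hfpf : ∀ i : Fin m, σ i ≠ i)
    {C : Finset (Fin m)} (hC : ∀ x ∈ C, σ x ∈ C) (hc : 4 ≤ C.card) :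
    ∃ a b : Fin m, a ≠ b ∧ m ≤ 2 * (invIn σ ((Finset.univ.erase a).erase b) + 1) := by
  classical
  set E := (C ×ˢ C).filter (fun p : Fin m × Fin m => p.1 < p.2 ∧ σ p.2 < σ p.1) with hEdef
  have hE : ∀ p ∈ E, p.1 ∈ C ∧ p.2 ∈ C ∧ p.1 ≠ p.2 := by
    intro p hp
    rw [hEdef, Finset.mem_filter, Finset.mem_product] at hp
    exact ⟨hp.1.1, hp.1.2, ne_of_lt hp.2.1⟩
  have hdeg : ∀ v ∈ C, ∃ p ∈ E, p.1 = v ∨ p.2 = v := by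
    intro v hv
    rcases (hfpf v).lt_or_gt with h | h
    · obtain ⟨y, hyC, hy1, hy2⟩ := partner_gt σ hC hv h
      exact ⟨(y, v), by
        rw [hEdef]
        exact Finset.mem_filter.mpr ⟨Finset.mem_product.mpr ⟨hyC, hv⟩, hy1, hy2⟩, Or.inr rfl⟩
    · obtain ⟨y, hyC, hy1, hy2⟩ := partner_lt σ hC hv h
      exact ⟨(v, y), by
        rw [hEdef]
        exact Finset.mem_filter.mpr ⟨Finset.mem_product.mpr ⟨hv, hyC⟩, hy1, hy2⟩, Or.inl rfl⟩
  have hI : C.card ≤ 2 * E.card := card_le_two_mul_invIn σ hC (fun x _ => hfpf x)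
  obtain ⟨a, haC, b, hbC, hab, hkey⟩ := graph_main C E hE hdeg hI hc
  refine ⟨a, b, hab, ?_⟩
  set T := Finset.univ \ C with hTdef
  have hTinv : ∀ x ∈ T, σ x ∈ T := by
    intro x hx
    rw [hTdef, Finset.mem_sdiff] at hx ⊢
    exact ⟨Finset.mem_univ _, fun hσ => hx.2 (mem_of_apply_mem σ hC hσ)⟩
  have hT : T.card ≤ 2 * invIn σ T := card_le_two_mul_invIn σ hTinv (fun x _ => hfpf x)
  set S := (Finset.univ.erase a).erase b with hSdef
  have hsum : invIn σ T + (E.filter (fun p => p.1 ≠ a ∧ p.2 ≠ a ∧ p.1 ≠ b ∧ p.2 ≠ b)).card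
      ≤ invIn σ S := by
    have hsub1 : (T ×ˢ T).filter (fun p : Fin m × Fin m => p.1 < p.2 ∧ σ p.2 < σ p.1)
        ⊆ (S ×ˢ S).filter (fun p : Fin m × Fin m => p.1 < p.2 ∧ σ p.2 < σ p.1) := by
      intro p hp
      rw [Finset.mem_filter, Finset.mem_product] at hp ⊢
      obtain ⟨⟨h1, h2⟩, h3⟩ := hp
      rw [hTdef, Finset.mem_sdiff] at h1 h2
      refine ⟨⟨(mem_SS a b p.1).mpr ⟨?_, ?_⟩, (mem_SS a b p.2).mpr ⟨?_, ?_⟩⟩, h3⟩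
      · rintro rfl; exact h1.2 haC
      · rintro rfl; exact h1.2 hbC
      · rintro rfl; exact h2.2 haC
      · rintro rfl; exact h2.2 hbC
    have hsub2 : E.filter (fun p => p.1 ≠ a ∧ p.2 ≠ a ∧ p.1 ≠ b ∧ p.2 ≠ b)
        ⊆ (S ×ˢ S).filter (fun p : Fin m × Fin m => p.1 < p.2 ∧ σ p.2 < σ p.1) := by
      intro p hp
      rw [Finset.mem_filter] at hp
      obtain ⟨hpE, h1, h2, h3, h4⟩ := hp
      rw [hEdef, Finset.mem_filter, Finset.mem_product] at hpE
      rw [Finset.mem_filter, Finset.mem_product]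
      exact ⟨⟨(mem_SS a b p.1).mpr ⟨h1, h3⟩, (mem_SS a b p.2).mpr ⟨h2, h4⟩⟩, hpE.2⟩
    have hdisj : Disjoint
        ((T ×ˢ T).filter (fun p : Fin m × Fin m => p.1 < p.2 ∧ σ p.2 < σ p.1))
        (E.filter (fun p => p.1 ≠ a ∧ p.2 ≠ a ∧ p.1 ≠ b ∧ p.2 ≠ b)) := by
      rw [Finset.disjoint_left]
      intro p hp hp'
      rw [Finset.mem_filter, Finset.mem_product] at hp
      rw [Finset.mem_filter] at hp'
      have h1 := (hE p hp'.1).1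
      obtain ⟨⟨hT1, _⟩, _⟩ := hp
      rw [hTdef, Finset.mem_sdiff] at hT1
      exact hT1.2 h1
    calc invIn σ T + (E.filter (fun p => p.1 ≠ a ∧ p.2 ≠ a ∧ p.1 ≠ b ∧ p.2 ≠ b)).card
        = (((T ×ˢ T).filter (fun p : Fin m × Fin m => p.1 < p.2 ∧ σ p.2 < σ p.1))
          ∪ (E.filter (fun p => p.1 ≠ a ∧ p.2 ≠ a ∧ p.1 ≠ b ∧ p.2 ≠ b))).card :=
          (Finset.card_union_of_disjoint hdisj).symm
      _ ≤ invIn σ S := Finset.card_le_card (Finset.union_subset hsub1 hsub2)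
  have hTcard : T.card = m - C.card := by
    rw [hTdef, Finset.card_univ_diff, Fintype.card_fin]
  have hCle : C.card ≤ m := by
    simpa using Finset.card_le_univ C
  omega

lemma main_two (σ : Equiv.Perm (Fin m)) (hfpf : ∀ i : Fin m, σ i ≠ i)
    {a b : Fin m} (hab : a ≠ b)
    (hC : ∀ x ∈ ({a, b} : Finset (Fin m)), σ x ∈ ({a, b} : Finset (Fin m))) :
    m ≤ 2 * (invIn σ ((Finset.univ.erase a).erase b) + 1) := by
  classical
  set T := Finset.univ \ ({a, b} : Finset (Fin m)) with hTdef
  have hTinv : ∀ x ∈ T, σ x ∈ T := by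
    intro x hx
    rw [hTdef, Finset.mem_sdiff] at hx ⊢
    exact ⟨Finset.mem_univ _, fun hσ => hx.2 (mem_of_apply_mem σ hC hσ)⟩
  have hT : T.card ≤ 2 * invIn σ T := card_le_two_mul_invIn σ hTinv (fun x _ => hfpf x)
  have hST : (Finset.univ.erase a).erase b = T := by
    ext x
    rw [mem_SS, hTdef, Finset.mem_sdiff]
    simp only [Finset.mem_insert, Finset.mem_singleton, Finset.mem_univ, true_and]
    tauto
  have hTcard : T.card = m - 2 := by
    rw [hTdef, Finset.card_univ_diff, Fintype.card_fin]
    congr 1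
    rw [Finset.card_insert_of_notMem (by simpa using hab), Finset.card_singleton]
  rw [hST]
  omega


lemma cycle_inv (σ : Equiv.Perm (Fin m)) (x : Fin m) :
    ∀ y ∈ (σ.cycleOf x).support, σ y ∈ (σ.cycleOf x).support := by
  intro y hy
  rw [Equiv.Perm.mem_support_cycleOf_iff] at hy ⊢
  exact ⟨hy.1.apply_right, hy.2⟩


end DCL

theorem disjoint_cycles_lemma {n m : ℕ} (hn : 1 ≤ n) (hm : 2 * n < m)
    (σ : Equiv.Perm (Fin m)) (hfpf : ∀ i : Fin m, σ i ≠ i)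
    (hcycles : 2 ≤ Multiset.card σ.cycleType) :
    ∃ m' ≤ m - 2, ∃ τ : Equiv.Perm (Fin m'), n ≤ invCount τ ∧ PatternContains σ τ := by
  classical
  obtain ⟨a, b, hab, hbound⟩ :
      ∃ a b : Fin m, a ≠ b ∧ m ≤ 2 * (DCL.invIn σ ((Finset.univ.erase a).erase b) + 1) := by
    by_cases h2 : ∃ x : Fin m, ((σ.cycleOf x).support).card = 2
    · obtain ⟨x, hx2⟩ := h2
      set C := (σ.cycleOf x).support with hCdef
      have hxC : x ∈ C :=
        Equiv.Perm.mem_support_cycleOf_iff.mpr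
          ⟨Equiv.Perm.SameCycle.refl σ x, Equiv.Perm.mem_support.mpr (hfpf x)⟩
      have hCinv : ∀ y ∈ C, σ y ∈ C := DCL.cycle_inv σ x
      have hσxC : σ x ∈ C := hCinv x hxC
      have hCeq : C = {x, σ x} := by
        symm
        apply Finset.eq_of_subset_of_card_le
        · intro y hy
          rcases Finset.mem_insert.mp hy with rfl | hy
          · exact hxC
          · rw [Finset.mem_singleton] at hy
            subst hy
            exact hσxC
        · rw [hx2, Finset.card_insert_of_notMem
            (by rw [Finset.mem_singleton]; exact fun h => hfpf x h.symm),
            Finset.card_singleton]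
      refine ⟨x, σ x, Ne.symm (hfpf x), DCL.main_two σ hfpf (Ne.symm (hfpf x)) ?_⟩
      rw [← hCeq]
      exact hCinv
    by_cases h4 : ∃ x : Fin m, 4 ≤ ((σ.cycleOf x).support).card
    · obtain ⟨x, hx4⟩ := h4
      exact DCL.main_ml σ hfpf (DCL.cycle_inv σ x) hx4
    · push_neg at h2 h4
      have h3 : ∀ x : Fin m, ((σ.cycleOf x).support).card = 3 := by
        intro x
        have hge : 2 ≤ ((σ.cycleOf x).support).card :=
          (Equiv.Perm.isCycle_cycleOf σ (hfpf x)).two_le_card_support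
        have hne := h2 x
        have hlt := h4 x
        omega
      have hm0 : 0 < m := by omega
      set x₀ : Fin m := ⟨0, hm0⟩ with hx₀def
      have hnotall : ∃ x₁ : Fin m, x₁ ∉ (σ.cycleOf x₀).support := by
        by_contra hall
        push_neg at hall
        have hcyc : σ.IsCycle :=
          ⟨x₀, hfpf x₀, fun y _ =>
            (Equiv.Perm.mem_support_cycleOf_iff.mp (hall y)).1⟩
        rw [hcyc.cycleType] at hcycles
        simp at hcycles
      obtain ⟨x₁, hx₁⟩ := hnotall
      set C := (σ.cycleOf x₀).support ∪ (σ.cycleOf x₁).support with hCdef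
      have hCinv : ∀ y ∈ C, σ y ∈ C := by
        intro y hy
        rw [hCdef, Finset.mem_union] at hy ⊢
        rcases hy with hy | hy
        · exact Or.inl (DCL.cycle_inv σ x₀ y hy)
        · exact Or.inr (DCL.cycle_inv σ x₁ y hy)
      have hdisj : Disjoint (σ.cycleOf x₀).support (σ.cycleOf x₁).support := by
        rw [Finset.disjoint_left]
        intro y hy0 hy1
        rw [Equiv.Perm.mem_support_cycleOf_iff] at hy0 hy1
        apply hx₁
        exact Equiv.Perm.mem_support_cycleOf_iff.mpr
          ⟨hy0.1.trans hy1.1.symm, Equiv.Perm.mem_support.mpr (hfpf x₀)⟩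
      have hcard : C.card = 6 := by
        rw [hCdef, Finset.card_union_of_disjoint hdisj, h3 x₀, h3 x₁]
      exact DCL.main_ml σ hfpf hCinv (by omega)
  set S := (Finset.univ.erase a).erase b with hSdef
  have hScard : S.card = m - 2 := by
    rw [hSdef, Finset.card_erase_of_mem (Finset.mem_erase.mpr ⟨hab.symm, Finset.mem_univ b⟩),
      Finset.card_erase_of_mem (Finset.mem_univ a), Finset.card_univ, Fintype.card_fin]
    omega
  obtain ⟨τ, hpat, hinv⟩ := DCL.pattern_of_subset σ S
  refine ⟨S.card, by omega, τ, ?_, hpat⟩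
  have hn' : n ≤ DCL.invIn σ S := by omega
  exact le_trans hn' hinv
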